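/- arXiv:1401.7545 — 5 statements merged into one kernel-verified Lean document; each statement's English description precedes it below -/
import Mathlib

section
/- Viète's formula: define a sequence of real numbers by a₀ = √(1/2) and a_{n+1} = √((1 + aₙ)/2). Then the partial products ∏_{k=0}^{n} aₖ converge to 2/π as n → ∞. Equivalently, π = 2 / (√(1/2) · √(1/2 + (1/2)√(1/2)) · √(1/2 + (1/2)√(1/2 + (1/2)√(1/2))) · · ·). -/
open Filter Topology

theorem viete_formula (a : ℕ → ℝ) (h0 : a 0 = Real.sqrt (1 / 2))
    (hrec : ∀ n, a (n + 1) = Real.sqrt ((1 + a n) / 2)) :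
    Tendsto (fun n : ℕ => ∏ k ∈ Finset.range (n + 1), a k) atTop (𝓝 (2 / Real.pi)) := by
  have pi_pos := Real.pi_pos
  -- a n = cos (π / 2^(n+2))
  have ha : ∀ n, a n = Real.cos (Real.pi / 2 ^ (n + 2)) := by
    intro n
    induction n with
    | zero =>
      rw [h0, show Real.pi / 2 ^ (0 + 2) = Real.pi / 4 by norm_num,
        Real.cos_pi_div_four]
      rw [show (1 : ℝ) / 2 = 2⁻¹ by norm_num, Real.sqrt_inv]
      have h2 : Real.sqrt 2 * Real.sqrt 2 = 2 := Real.mul_self_sqrt (by norm_num)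
      have hs : (0 : ℝ) < Real.sqrt 2 := Real.sqrt_pos.2 (by norm_num)
      field_simp
      nlinarith [h2]
    | succ n ih =>
      rw [hrec, ih]
      have hx : Real.pi / 2 ^ (n + 2) ≤ Real.pi := by
        apply div_le_self pi_pos.le
        have : (1 : ℝ) ≤ 2 ^ (n + 2) := one_le_pow₀ (by norm_num)
        linarith
      have hx0 : 0 ≤ Real.pi / 2 ^ (n + 2) := by positivity
      rw [← Real.cos_half (by linarith) hx]
      congr 1
      ring
  -- key product identity
  have key : ∀ n : ℕ, (∏ k ∈ Finset.range (n + 1), a k) *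
      (2 ^ (n + 1) * Real.sin (Real.pi / 2 ^ (n + 2))) = 1 := by
    intro n
    induction n with
    | zero =>
      simp only [zero_add, Finset.prod_range_one, ha 0]
      have := Real.sin_two_mul (Real.pi / 4)
      rw [show 2 * (Real.pi / 4) = Real.pi / 2 by ring, Real.sin_pi_div_two] at this
      rw [show Real.pi / 2 ^ (0 + 2) = Real.pi / 4 by norm_num]
      linarith [this]
    | succ n ih =>
      rw [Finset.prod_range_succ]
      have hd : Real.sin (Real.pi / 2 ^ (n + 2)) =
          2 * Real.sin (Real.pi / 2 ^ (n + 3)) * Real.cos (Real.pi / 2 ^ (n + 3)) := by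
        rw [← Real.sin_two_mul]
        congr 1
        rw [eq_comm, mul_div_assoc']
        rw [div_eq_div_iff (by positivity) (by positivity)]
        ring
      rw [hd] at ih
      rw [ha (n + 1)]
      calc (∏ k ∈ Finset.range (n + 1), a k) * Real.cos (Real.pi / 2 ^ (n + 1 + 2)) *
            (2 ^ (n + 1 + 1) * Real.sin (Real.pi / 2 ^ (n + 1 + 2)))
          = (∏ k ∈ Finset.range (n + 1), a k) *
            (2 ^ (n + 1) * (2 * Real.sin (Real.pi / 2 ^ (n + 3)) *
              Real.cos (Real.pi / 2 ^ (n + 3)))) := by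
            rw [show n + 1 + 2 = n + 3 from rfl]; ring
        _ = 1 := ih
  -- positivity of sin
  have hsinpos : ∀ n : ℕ, 0 < Real.sin (Real.pi / 2 ^ (n + 2)) := by
    intro n
    apply Real.sin_pos_of_pos_of_lt_pi (by positivity)
    rw [div_lt_iff₀ (by positivity)]
    have h4 : (2:ℝ) ^ (n + 2) = 4 * 2 ^ n := by ring
    have h2n : (1:ℝ) ≤ 2 ^ n := one_le_pow₀ (by norm_num)
    nlinarith
  -- rewrite the product
  have heq : ∀ n : ℕ, (∏ k ∈ Finset.range (n + 1), a k) =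
      2 / Real.pi * ((Real.pi / 2 ^ (n + 2)) / Real.sin (Real.pi / 2 ^ (n + 2))) := by
    intro n
    have hk := key n
    have hs := hsinpos n
    have h2 : (0:ℝ) < 2 ^ (n + 1) := by positivity
    have hP : (∏ k ∈ Finset.range (n + 1), a k) =
        1 / (2 ^ (n + 1) * Real.sin (Real.pi / 2 ^ (n + 2))) := by
      rw [eq_div_iff (by positivity)]
      exact hk
    rw [hP]
    set s := Real.sin (Real.pi / 2 ^ (n + 2)) with hsdef
    have h2pow : (2:ℝ) ^ (n + 2) = 2 * 2 ^ (n + 1) := by ring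
    rw [h2pow]
    field_simp
  -- limits
  have hx0 : Tendsto (fun n : ℕ => Real.pi / 2 ^ (n + 2)) atTop (𝓝 0) := by
    apply Tendsto.div_atTop tendsto_const_nhds
    exact (tendsto_pow_atTop_atTop_of_one_lt (by norm_num : (1:ℝ) < 2)).comp
      (tendsto_add_atTop_nat 2)
  have hx0' : Tendsto (fun n : ℕ => Real.pi / 2 ^ (n + 2)) atTop (𝓝[≠] 0) := by
    apply tendsto_nhdsWithin_of_tendsto_nhds_of_eventually_within _ hx0
    filter_upwards with n
    have : (0:ℝ) < Real.pi / 2 ^ (n + 2) := by positivity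
    exact ne_of_gt this
  have hslope : Tendsto (fun y : ℝ => Real.sin y / y) (𝓝[≠] (0:ℝ)) (𝓝 1) := by
    have h := hasDerivAt_iff_tendsto_slope.mp (Real.hasDerivAt_sin 0)
    rw [Real.cos_zero] at h
    refine h.congr' ?_
    filter_upwards with y
    simp [slope_def_field, div_eq_div_iff]
  have hsin : Tendsto (fun n : ℕ => Real.sin (Real.pi / 2 ^ (n + 2)) /
      (Real.pi / 2 ^ (n + 2))) atTop (𝓝 1) := hslope.comp hx0'
  have hinv : Tendsto (fun n : ℕ => (Real.pi / 2 ^ (n + 2)) /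
      Real.sin (Real.pi / 2 ^ (n + 2))) atTop (𝓝 1) := by
    have := (hsin.inv₀ one_ne_zero)
    rw [inv_one] at this
    refine this.congr ?_
    intro n
    rw [inv_div]
  have := hinv.const_mul (2 / Real.pi)
  rw [mul_one] at this
  refine this.congr ?_
  intro n
  exact (heq n).symm
end

section
/- The Riemann sums of the Gaussian on expanding intervals converge to its integral: the sequence N ↦ ∑_{k=−N²}^{N²} exp(−(k/N)²/2)·(1/N), where k ranges over integers from −N² to N², converges as N → ∞ to ∫_{−∞}^{∞} exp(−x²/2) dx. -/
open Filter Topology MeasureTheory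

noncomputable def gf : ℝ → ℝ := fun x => Real.exp (-x ^ 2 / 2)

lemma gf_cont : Continuous gf := by
  unfold gf; continuity

lemma gf_nonneg (x : ℝ) : 0 ≤ gf x := (Real.exp_pos _).le

lemma gf_even (x : ℝ) : gf (-x) = gf x := by simp [gf]

lemma gf_anti : AntitoneOn gf (Set.Ici 0) := by
  intro a ha b hb hab
  simp only [gf]
  apply Real.exp_le_exp.mpr
  simp only [Set.mem_Ici] at ha hb
  nlinarith

lemma gf_integrable : Integrable gf := by
  have h := integrable_exp_neg_mul_sq (show (0:ℝ) < 1/2 by norm_num)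
  convert h using 2 with x
  simp only [gf]
  congr 1
  ring

lemma term_lb (n : ℕ) (hn : 1 ≤ n) (k : ℕ) :
    ∫ x in ((k : ℝ)/n)..(((k : ℝ)+1)/n), gf x ≤ gf ((k : ℝ)/n) * (1/n) := by
  have hpos : (0:ℝ) < n := by exact_mod_cast hn
  have hle : (k : ℝ)/n ≤ ((k : ℝ)+1)/n := by gcongr; linarith
  have hmono : ∀ x ∈ Set.Icc ((k : ℝ)/n) (((k : ℝ)+1)/n), gf x ≤ gf ((k : ℝ)/n) := by
    intro x hx
    have h0 : (0:ℝ) ≤ (k : ℝ)/n := by positivity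
    exact gf_anti h0 (h0.trans hx.1) hx.1
  calc ∫ x in ((k : ℝ)/n)..(((k : ℝ)+1)/n), gf x
      ≤ ∫ _x in ((k : ℝ)/n)..(((k : ℝ)+1)/n), gf ((k : ℝ)/n) :=
        intervalIntegral.integral_mono_on hle (gf_cont.intervalIntegrable _ _)
          intervalIntegrable_const hmono
    _ = gf ((k : ℝ)/n) * (1/n) := by
        rw [intervalIntegral.integral_const, smul_eq_mul]
        field_simp
        ring

lemma term_ub (n : ℕ) (hn : 1 ≤ n) (k : ℕ) :
    gf (((k : ℝ)+1)/n) * (1/n) ≤ ∫ x in ((k : ℝ)/n)..(((k : ℝ)+1)/n), gf x := by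
  have hpos : (0:ℝ) < n := by exact_mod_cast hn
  have hle : (k : ℝ)/n ≤ ((k : ℝ)+1)/n := by gcongr; linarith
  have hmono : ∀ x ∈ Set.Icc ((k : ℝ)/n) (((k : ℝ)+1)/n), gf (((k : ℝ)+1)/n) ≤ gf x := by
    intro x hx
    have h0 : (0:ℝ) ≤ (k : ℝ)/n := by positivity
    have h1 : (0:ℝ) ≤ ((k : ℝ)+1)/n := by positivity
    exact gf_anti (h0.trans hx.1) h1 hx.2
  calc gf (((k : ℝ)+1)/n) * (1/n)
      = ∫ _x in ((k : ℝ)/n)..(((k : ℝ)+1)/n), gf (((k : ℝ)+1)/n) := by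
        rw [intervalIntegral.integral_const, smul_eq_mul]
        field_simp
        ring
    _ ≤ ∫ x in ((k : ℝ)/n)..(((k : ℝ)+1)/n), gf x :=
        intervalIntegral.integral_mono_on hle intervalIntegrable_const
          (gf_cont.intervalIntegrable _ _) hmono

lemma sum_int (n M : ℕ) :
    ∑ k ∈ Finset.range M, ∫ x in ((k : ℝ)/n)..(((k : ℝ)+1)/n), gf x
      = ∫ x in (0:ℝ)..((M : ℝ)/n), gf x := by
  have h := intervalIntegral.sum_integral_adjacent_intervals
    (a := fun k : ℕ => (k : ℝ)/n) (n := M) (μ := volume) (f := gf)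
    (fun k _ => gf_cont.intervalIntegrable _ _)
  simpa [Nat.cast_succ] using h

lemma sum_lower (n M : ℕ) (hn : 1 ≤ n) :
    ∫ x in (0:ℝ)..((M : ℝ)/n), gf x ≤ ∑ k ∈ Finset.range M, gf ((k : ℝ)/n) * (1/n) := by
  rw [← sum_int n M]
  exact Finset.sum_le_sum fun k _ => term_lb n hn k

lemma sum_upper (n M : ℕ) (hn : 1 ≤ n) :
    ∑ k ∈ Finset.range (M+1), gf ((k : ℝ)/n) * (1/n)
      ≤ 1/n + ∫ x in (0:ℝ)..((M : ℝ)/n), gf x := by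
  rw [Finset.sum_range_succ', ← sum_int n M, add_comm]
  apply add_le_add
  · simp [gf]
  · apply Finset.sum_le_sum
    intro k _
    have := term_ub n hn k
    push_cast
    convert this using 3

lemma sym_sum (h : ℝ → ℝ) (heven : ∀ x, h (-x) = h x) (M : ℕ) :
    ∑ k ∈ Finset.Icc (-(M:ℤ)) (M:ℤ), h (k : ℝ)
      = 2 * ∑ k ∈ Finset.range (M+1), h (k : ℝ) - h 0 := by
  induction M with
  | zero => simp; ring
  | succ m ih =>
    have h1 : (-(((m:ℤ))+1)) ∉ insert ((m:ℤ)+1) (Finset.Icc (-(m:ℤ)) (m:ℤ)) := by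
      simp; omega
    have h2 : ((m:ℤ)+1) ∉ Finset.Icc (-(m:ℤ)) (m:ℤ) := by simp
    have hins : Finset.Icc (-((m:ℤ)+1)) ((m:ℤ)+1)
        = insert (-((m:ℤ)+1)) (insert ((m:ℤ)+1) (Finset.Icc (-(m:ℤ)) (m:ℤ))) := by
      ext x; simp; omega
    push_cast
    rw [hins, Finset.sum_insert h1, Finset.sum_insert h2, ih,
      Finset.sum_range_succ (f := fun k : ℕ => h (k : ℝ)) (n := m+1)]
    push_cast
    rw [heven ((m:ℝ)+1)]
    ring

theorem gaussian_riemann_sum_tendsto_integral :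
    Tendsto (fun N : ℕ => ∑ k ∈ Finset.Icc (-(N : ℤ) ^ 2) ((N : ℤ) ^ 2),
        Real.exp (-((k : ℝ) / (N : ℝ)) ^ 2 / 2) * (1 / (N : ℝ)))
      atTop (𝓝 (∫ x : ℝ, Real.exp (-x ^ 2 / 2))) := by
  have hint : ∀ a b : ℝ, IntervalIntegrable gf volume a b :=
    fun a b => gf_cont.intervalIntegrable a b
  -- limit of the bounding sequences
  have hT : Tendsto (fun n : ℕ => ∫ x in (-(n:ℝ))..(n:ℝ), gf x) atTop
      (𝓝 (∫ x : ℝ, gf x)) := by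
    apply intervalIntegral_tendsto_integral gf_integrable
    · exact tendsto_neg_atTop_atBot.comp tendsto_natCast_atTop_atTop
    · exact tendsto_natCast_atTop_atTop
  have hone : Tendsto (fun n : ℕ => 1/(n:ℝ)) atTop (𝓝 0) :=
    tendsto_one_div_atTop_nhds_zero_nat
  have hlo : Tendsto (fun n : ℕ => (∫ x in (-(n:ℝ))..(n:ℝ), gf x) - 1/(n:ℝ)) atTop
      (𝓝 (∫ x : ℝ, gf x)) := by
    simpa using hT.sub hone
  have hhi : Tendsto (fun n : ℕ => (∫ x in (-(n:ℝ))..(n:ℝ), gf x) + 1/(n:ℝ)) atTop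
      (𝓝 (∫ x : ℝ, gf x)) := by
    simpa using hT.add hone
  have key : ∀ n : ℕ, 1 ≤ n →
      ((∫ x in (-(n:ℝ))..(n:ℝ), gf x) - 1/(n:ℝ)
        ≤ ∑ k ∈ Finset.Icc (-(n : ℤ) ^ 2) ((n : ℤ) ^ 2),
            Real.exp (-((k : ℝ) / (n : ℝ)) ^ 2 / 2) * (1 / (n : ℝ)))
      ∧ (∑ k ∈ Finset.Icc (-(n : ℤ) ^ 2) ((n : ℤ) ^ 2),
            Real.exp (-((k : ℝ) / (n : ℝ)) ^ 2 / 2) * (1 / (n : ℝ))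
        ≤ (∫ x in (-(n:ℝ))..(n:ℝ), gf x) + 1/(n:ℝ)) := by
    intro n hn
    have hpos : (0:ℝ) < n := by exact_mod_cast hn
    set h : ℝ → ℝ := fun x => gf (x/n) * (1/n) with hh
    have heven : ∀ x, h (-x) = h x := by
      intro x
      simp only [hh, neg_div]
      rw [gf_even]
    have hrw : ∑ k ∈ Finset.Icc (-(n : ℤ) ^ 2) ((n : ℤ) ^ 2),
          Real.exp (-((k : ℝ) / (n : ℝ)) ^ 2 / 2) * (1 / (n : ℝ))
        = 2 * ∑ k ∈ Finset.range (n^2+1), gf ((k:ℝ)/n) * (1/n) - 1/n := by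
      have : (-(n : ℤ)^2) = -((n^2 : ℕ) : ℤ) := by push_cast; ring
      have h2 : ((n : ℤ)^2) = ((n^2 : ℕ) : ℤ) := by push_cast; ring
      rw [this, h2]
      have hs : ∑ k ∈ Finset.Icc (-((n^2 : ℕ) : ℤ)) ((n^2 : ℕ) : ℤ),
          Real.exp (-((k : ℝ) / (n : ℝ)) ^ 2 / 2) * (1 / (n : ℝ))
          = 2 * ∑ k ∈ Finset.range (n^2+1), h (k : ℝ) - h 0 := sym_sum h heven (n^2)
      rw [hs]
      simp only [hh]
      norm_num [gf]
    have hM : ((n^2 : ℕ) : ℝ)/n = (n : ℝ) := by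
      field_simp
      norm_cast
    have hsplit : 2 * ∫ x in (0:ℝ)..(n:ℝ), gf x = ∫ x in (-(n:ℝ))..(n:ℝ), gf x := by
      have hneg : ∫ x in (-(n:ℝ))..(0:ℝ), gf x = ∫ x in (0:ℝ)..(n:ℝ), gf x := by
        rw [show (0:ℝ) = -(0:ℝ) by ring]
        rw [← intervalIntegral.integral_comp_neg (f := gf)]
        simp [gf_even]
      rw [← intervalIntegral.integral_add_adjacent_intervals (hint (-(n:ℝ)) 0) (hint 0 n), hneg]
      ring
    constructor
    · -- lower bound
      rw [hrw]
      have h1 : ∫ x in (0:ℝ)..(n:ℝ), gf x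
          ≤ ∑ k ∈ Finset.range (n^2+1), gf ((k:ℝ)/n) * (1/n) := by
        have := sum_lower n (n^2) hn
        rw [hM] at this
        refine le_trans this ?_
        rw [Finset.sum_range_succ]
        have : (0:ℝ) ≤ gf ((↑(n^2):ℝ)/n) * (1/n) :=
          mul_nonneg (gf_nonneg _) (by positivity)
        linarith
      linarith [hsplit]
    · -- upper bound
      rw [hrw]
      have h1 : ∑ k ∈ Finset.range (n^2+1), gf ((k:ℝ)/n) * (1/n)
          ≤ 1/n + ∫ x in (0:ℝ)..(n:ℝ), gf x := by
        have := sum_upper n (n^2) hn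
        rwa [hM] at this
      linarith [hsplit]
  have hIeq : (∫ x : ℝ, Real.exp (-x ^ 2 / 2)) = ∫ x : ℝ, gf x := rfl
  rw [hIeq]
  apply tendsto_of_tendsto_of_tendsto_of_le_of_le' hlo hhi
  · filter_upwards [eventually_ge_atTop 1] with n hn using (key n hn).1
  · filter_upwards [eventually_ge_atTop 1] with n hn using (key n hn).2
end

section
/- Let f : ℝ → ℝ be continuous, nonnegative, Lebesgue integrable on ℝ, antitone on [0, ∞) and monotone on (−∞, 0]. Then the Riemann sums on expanding intervals converge to the integral: the sequence N ↦ ∑_{k=−N²}^{N²} f(k/N)·(1/N), where k ranges over integers from −N² to N², converges as N → ∞ to ∫_{−∞}^{∞} f(x) dx. -/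
open Filter Topology MeasureTheory

private lemma step_le (h : ℝ → ℝ) (hcont : Continuous h) (hanti : AntitoneOn h (Set.Ici 0))
    {a b : ℝ} (ha : 0 ≤ a) (hab : a ≤ b) :
    ∫ x in a..b, h x ≤ h a * (b - a) := by
  calc ∫ x in a..b, h x ≤ ∫ _x in a..b, h a := by
        apply intervalIntegral.integral_mono_on hab (hcont.intervalIntegrable a b)
          intervalIntegrable_const
        intro x hx
        exact hanti ha (le_trans ha hx.1) hx.1
    _ = (b - a) • h a := intervalIntegral.integral_const _
    _ = h a * (b - a) := by rw [smul_eq_mul, mul_comm]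

private lemma step_ge (h : ℝ → ℝ) (hcont : Continuous h) (hanti : AntitoneOn h (Set.Ici 0))
    {a b : ℝ} (ha : 0 ≤ a) (hab : a ≤ b) :
    h b * (b - a) ≤ ∫ x in a..b, h x := by
  calc h b * (b - a) = (b - a) • h b := by rw [smul_eq_mul, mul_comm]
    _ = ∫ _x in a..b, h b := (intervalIntegral.integral_const _).symm
    _ ≤ ∫ x in a..b, h x := by
        apply intervalIntegral.integral_mono_on hab intervalIntegrable_const
          (hcont.intervalIntegrable a b)
        intro x hx
        exact hanti (le_trans ha hx.1) (le_trans ha hab) hx.2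

private lemma sum_ge_integral (h : ℝ → ℝ) (hcont : Continuous h)
    (hanti : AntitoneOn h (Set.Ici 0)) (c : ℝ) (hc : 0 < c) :
    ∀ n : ℕ, ∫ x in (0:ℝ)..(n : ℝ)/c, h x ≤ ∑ i ∈ Finset.range n, h ((i : ℝ)/c) * (1/c) := by
  intro n
  induction n with
  | zero => simp
  | succ n ih =>
    have hadj : (∫ x in (0:ℝ)..(n:ℝ)/c, h x) + ∫ x in (n:ℝ)/c..((n:ℝ)+1)/c, h x
        = ∫ x in (0:ℝ)..((n:ℝ)+1)/c, h x :=
      intervalIntegral.integral_add_adjacent_intervals (hcont.intervalIntegrable _ _)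
        (hcont.intervalIntegrable _ _)
    have hstep : ∫ x in (n:ℝ)/c..((n:ℝ)+1)/c, h x ≤ h ((n:ℝ)/c) * (1/c) := by
      have := step_le h hcont hanti (a := (n:ℝ)/c) (b := ((n:ℝ)+1)/c)
        (by positivity) (by gcongr; linarith)
      calc ∫ x in (n:ℝ)/c..((n:ℝ)+1)/c, h x ≤ h ((n:ℝ)/c) * (((n:ℝ)+1)/c - (n:ℝ)/c) := this
        _ = h ((n:ℝ)/c) * (1/c) := by field_simp; ring
    rw [Finset.sum_range_succ]
    push_cast
    rw [← hadj]
    linarith [ih]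

private lemma sum_le_integral (h : ℝ → ℝ) (hcont : Continuous h)
    (hanti : AntitoneOn h (Set.Ici 0)) (c : ℝ) (hc : 0 < c) :
    ∀ n : ℕ, ∑ i ∈ Finset.range n, h (((i : ℝ)+1)/c) * (1/c) ≤ ∫ x in (0:ℝ)..(n : ℝ)/c, h x := by
  intro n
  induction n with
  | zero => simp
  | succ n ih =>
    have hadj : (∫ x in (0:ℝ)..(n:ℝ)/c, h x) + ∫ x in (n:ℝ)/c..((n:ℝ)+1)/c, h x
        = ∫ x in (0:ℝ)..((n:ℝ)+1)/c, h x :=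
      intervalIntegral.integral_add_adjacent_intervals (hcont.intervalIntegrable _ _)
        (hcont.intervalIntegrable _ _)
    have hstep : h (((n:ℝ)+1)/c) * (1/c) ≤ ∫ x in (n:ℝ)/c..((n:ℝ)+1)/c, h x := by
      have := step_ge h hcont hanti (a := (n:ℝ)/c) (b := ((n:ℝ)+1)/c)
        (by positivity) (by gcongr; linarith)
      have heq : (((n:ℝ)+1)/c - (n:ℝ)/c) = 1/c := by field_simp; ring
      rw [heq] at this
      exact this
    rw [Finset.sum_range_succ]
    push_cast
    rw [← hadj]
    linarith [ih]

private lemma sum_split (f : ℝ → ℝ) (c : ℝ) (n : ℕ) (hn : 1 ≤ n) :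
    ∑ k ∈ Finset.Icc (-(n:ℤ)) (n:ℤ), f ((k:ℝ)/c) * (1/c)
      = (∑ i ∈ Finset.range n, f ((-((i:ℝ)+1))/c) * (1/c))
        + ∑ i ∈ Finset.range (n+1), f ((i:ℝ)/c) * (1/c) := by
  have hsplit : Finset.Icc (-(n:ℤ)) (n:ℤ) = Finset.Icc (-(n:ℤ)) (-1) ∪ Finset.Icc 0 (n:ℤ) := by
    ext k
    simp only [Finset.mem_Icc, Finset.mem_union]
    omega
  have hdisj : Disjoint (Finset.Icc (-(n:ℤ)) (-1)) (Finset.Icc 0 (n:ℤ)) := by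
    rw [Finset.disjoint_left]
    intro k hk hk2
    simp only [Finset.mem_Icc] at hk hk2
    omega
  rw [hsplit, Finset.sum_union hdisj]
  congr 1
  · have hmap : Finset.Icc (-(n:ℤ)) (-1)
        = Finset.map ⟨fun i : ℕ => -((i:ℤ)+1), fun a b hab => by simp only [] at hab; omega⟩ (Finset.range n) := by
      ext k
      simp only [Finset.mem_Icc, Finset.mem_map, Finset.mem_range, Function.Embedding.coeFn_mk]
      erw [Function.Embedding.coeFn_mk]
      constructor
      · intro hk
        exact ⟨(-(k+1)).toNat, by omega, by omega⟩
      · rintro ⟨i, hi, rfl⟩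
        omega
    rw [hmap, Finset.sum_map]
    apply Finset.sum_congr rfl
    intro i _
    erw [Function.Embedding.coeFn_mk]
    norm_num
  · have hmap : Finset.Icc (0:ℤ) (n:ℤ)
        = Finset.map ⟨fun i : ℕ => (i:ℤ), fun a b hab => by simp only [] at hab; omega⟩ (Finset.range (n+1)) := by
      ext k
      simp only [Finset.mem_Icc, Finset.mem_map, Finset.mem_range, Function.Embedding.coeFn_mk]
      erw [Function.Embedding.coeFn_mk]
      constructor
      · intro hk
        exact ⟨k.toNat, by omega, by omega⟩
      · rintro ⟨i, hi, rfl⟩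
        omega
    rw [hmap, Finset.sum_map]
    apply Finset.sum_congr rfl
    intro i _
    erw [Function.Embedding.coeFn_mk]
    simp only [Int.cast_natCast]

theorem riemann_sum_tendsto_integral (f : ℝ → ℝ) (hc : Continuous f) (hnn : ∀ x, 0 ≤ f x)
    (hint : MeasureTheory.Integrable f) (hanti : AntitoneOn f (Set.Ici 0))
    (hmono : MonotoneOn f (Set.Iic 0)) :
    Tendsto (fun N : ℕ => ∑ k ∈ Finset.Icc (-(N : ℤ) ^ 2) ((N : ℤ) ^ 2),
        f ((k : ℝ) / (N : ℝ)) * (1 / (N : ℝ)))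
      atTop (𝓝 (∫ x : ℝ, f x)) := by
  set g : ℝ → ℝ := fun x => f (-x) with hg
  have hgcont : Continuous g := hc.comp continuous_neg
  have hganti : AntitoneOn g (Set.Ici 0) := by
    intro a ha b hb hab
    exact hmono (by simpa using hb) (by simpa using ha) (by linarith)
  -- lower and upper bounding sequences
  have hlow : Tendsto (fun N : ℕ => (∫ x in (-(N:ℝ) - 1/N)..((N:ℝ) + 1/N), f x) - f 0 * (1/N))
      atTop (𝓝 (∫ x : ℝ, f x)) := by
    have h1 : Tendsto (fun N : ℕ => -(N:ℝ) - 1/N) atTop atBot := by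
      have hle : ∀ N : ℕ, -(N:ℝ) - 1/N ≤ ((fun x : ℝ => -x) ∘ (fun N : ℕ => (N:ℝ))) N := by
        intro N
        have : (0:ℝ) ≤ 1/(N:ℝ) := by positivity
        simp only [Function.comp_apply]; linarith
      exact tendsto_atBot_mono hle (tendsto_neg_atTop_atBot.comp tendsto_natCast_atTop_atTop)
    have h2 : Tendsto (fun N : ℕ => (N:ℝ) + 1/N) atTop atTop := by
      have hle : ∀ N : ℕ, (N:ℝ) ≤ (N:ℝ) + 1/N := by
        intro N
        have : (0:ℝ) ≤ 1/(N:ℝ) := by positivity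
        linarith
      exact tendsto_atTop_mono hle tendsto_natCast_atTop_atTop
    have h3 := MeasureTheory.intervalIntegral_tendsto_integral hint h1 h2
    have h4 : Tendsto (fun N : ℕ => f 0 * (1/(N:ℝ))) atTop (𝓝 0) := by
      have := tendsto_one_div_atTop_nhds_zero_nat (𝕜 := ℝ)
      simpa using this.const_mul (f 0)
    simpa using h3.sub h4
  have hup : Tendsto (fun N : ℕ => (∫ x in (-(N:ℝ))..(N:ℝ), f x) + f 0 * (1/N))
      atTop (𝓝 (∫ x : ℝ, f x)) := by
    have h1 : Tendsto (fun N : ℕ => -(N:ℝ)) atTop atBot :=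
      tendsto_neg_atTop_atBot.comp tendsto_natCast_atTop_atTop
    have h3 := MeasureTheory.intervalIntegral_tendsto_integral hint h1 tendsto_natCast_atTop_atTop
    have h4 : Tendsto (fun N : ℕ => f 0 * (1/(N:ℝ))) atTop (𝓝 0) := by
      have := tendsto_one_div_atTop_nhds_zero_nat (𝕜 := ℝ)
      simpa using this.const_mul (f 0)
    simpa using h3.add h4
  apply tendsto_of_tendsto_of_tendsto_of_le_of_le' hlow hup
  · -- lower bound
    filter_upwards [eventually_ge_atTop 1] with N hN
    have hc0 : (0:ℝ) < N := by exact_mod_cast hN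
    set n : ℕ := N^2 with hn
    have hn1 : 1 ≤ n := Nat.one_le_pow _ _ hN
    have hIcc : Finset.Icc (-(N:ℤ)^2) ((N:ℤ)^2) = Finset.Icc (-((n:ℕ):ℤ)) ((n:ℕ):ℤ) := by
      norm_cast
    rw [hIcc, sum_split f (N:ℝ) n hn1]
    set a : ℝ := ((n:ℝ)+1)/(N:ℝ) with ha
    -- positive part
    have hpos : ∫ x in (0:ℝ)..a, f x ≤ ∑ i ∈ Finset.range (n+1), f ((i:ℝ)/(N:ℝ)) * (1/(N:ℝ)) := by
      have := sum_ge_integral f hc hanti (N:ℝ) hc0 (n+1)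
      have hcast : (((n+1:ℕ)):ℝ)/(N:ℝ) = a := by push_cast [ha]; ring
      rwa [hcast] at this
    -- negative part
    have hneg : (∫ x in (0:ℝ)..a, g x) - f 0 * (1/(N:ℝ))
        ≤ ∑ i ∈ Finset.range n, f ((-((i:ℝ)+1))/(N:ℝ)) * (1/(N:ℝ)) := by
      have h1 := sum_ge_integral g hgcont hganti (N:ℝ) hc0 (n+1)
      have hcast : (((n+1:ℕ)):ℝ)/(N:ℝ) = a := by push_cast [ha]; ring
      rw [hcast, Finset.sum_range_succ'] at h1
      have e0 : g (((0:ℕ):ℝ)/(N:ℝ)) = f 0 := by rw [hg]; norm_num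
      have e1 : ∀ k:ℕ, g (((k+1:ℕ):ℝ)/(N:ℝ)) = f ((-((k:ℝ)+1))/(N:ℝ)) := by
        intro k
        rw [hg]
        push_cast
        congr 1
        ring
      rw [e0] at h1
      have h3 : (∑ k ∈ Finset.range n, g (((k+1:ℕ):ℝ)/(N:ℝ)) * (1/(N:ℝ)))
          = ∑ k ∈ Finset.range n, f ((-((k:ℝ)+1))/(N:ℝ)) * (1/(N:ℝ)) :=
        Finset.sum_congr rfl fun k _ => by rw [e1]
      rw [h3] at h1
      linarith [h1]
    -- convert g-integral
    have hgi : ∫ x in (0:ℝ)..a, g x = ∫ x in (-a)..(0:ℝ), f x := by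
      rw [hg]
      rw [intervalIntegral.integral_comp_neg f]
      norm_num
    have hadd : (∫ x in (-a)..(0:ℝ), f x) + ∫ x in (0:ℝ)..a, f x = ∫ x in (-a)..a, f x :=
      intervalIntegral.integral_add_adjacent_intervals (hc.intervalIntegrable _ _)
        (hc.intervalIntegrable _ _)
    have hA : a = (N:ℝ) + 1/N := by
      rw [ha, hn]
      push_cast
      field_simp
    have hnegA : -a = -(N:ℝ) - 1/N := by rw [hA]; ring
    have hgoal : (∫ x in (-(N:ℝ) - 1/N)..((N:ℝ) + 1/N), f x)
        = (∫ x in (-a)..(0:ℝ), f x) + ∫ x in (0:ℝ)..a, f x := by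
      rw [hadd, hnegA, hA]
    rw [hgi] at hneg
    rw [hgoal]
    linarith [hpos, hneg]
  · filter_upwards [eventually_ge_atTop 1] with N hN
    have hc0 : (0:ℝ) < N := by exact_mod_cast hN
    set n : ℕ := N^2 with hn
    have hn1 : 1 ≤ n := Nat.one_le_pow _ _ hN
    have hIcc : Finset.Icc (-(N:ℤ)^2) ((N:ℤ)^2) = Finset.Icc (-((n:ℕ):ℤ)) ((n:ℕ):ℤ) := by
      norm_cast
    rw [hIcc, sum_split f (N:ℝ) n hn1]
    set b : ℝ := (n:ℝ)/(N:ℝ) with hb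
    -- positive part
    have hpos : ∑ i ∈ Finset.range (n+1), f ((i:ℝ)/(N:ℝ)) * (1/(N:ℝ))
        ≤ f 0 * (1/(N:ℝ)) + ∫ x in (0:ℝ)..b, f x := by
      have h1 := sum_le_integral f hc hanti (N:ℝ) hc0 n
      have hsucc := Finset.sum_range_succ' (fun i : ℕ => f ((i:ℝ)/(N:ℝ)) * (1/(N:ℝ))) n
      rw [hsucc]
      have h3 : (∑ i ∈ Finset.range n, f (((i+1:ℕ):ℝ)/(N:ℝ)) * (1/(N:ℝ)))
          = ∑ i ∈ Finset.range n, f (((i:ℝ)+1)/(N:ℝ)) * (1/(N:ℝ)) :=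
        Finset.sum_congr rfl fun i _ => by push_cast; ring_nf
      rw [h3]
      simp only [Nat.cast_zero, zero_div]
      rw [hb]
      linarith [h1]
    -- negative part
    have hneg : ∑ i ∈ Finset.range n, f ((-((i:ℝ)+1))/(N:ℝ)) * (1/(N:ℝ))
        ≤ ∫ x in (0:ℝ)..b, g x := by
      have h1 := sum_le_integral g hgcont hganti (N:ℝ) hc0 n
      have h3 : (∑ i ∈ Finset.range n, g (((i:ℝ)+1)/(N:ℝ)) * (1/(N:ℝ)))
          = ∑ i ∈ Finset.range n, f ((-((i:ℝ)+1))/(N:ℝ)) * (1/(N:ℝ)) :=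
        Finset.sum_congr rfl fun i _ => by
          rw [hg]
          simp only []
          congr 2
          ring
      rw [h3] at h1
      exact h1
    have hgi : ∫ x in (0:ℝ)..b, g x = ∫ x in (-b)..(0:ℝ), f x := by
      rw [hg, intervalIntegral.integral_comp_neg f]
      norm_num
    have hadd : (∫ x in (-b)..(0:ℝ), f x) + ∫ x in (0:ℝ)..b, f x = ∫ x in (-b)..b, f x :=
      intervalIntegral.integral_add_adjacent_intervals (hc.intervalIntegrable _ _)
        (hc.intervalIntegrable _ _)
    have hB : b = (N:ℝ) := by
      rw [hb, hn]
      push_cast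
      field_simp
    have hnegB : -b = -(N:ℝ) := by rw [hB]
    have hgoal : (∫ x in (-(N:ℝ))..(N:ℝ), f x)
        = (∫ x in (-b)..(0:ℝ), f x) + ∫ x in (0:ℝ)..b, f x := by
      rw [hadd, hnegB, hB]
    rw [hgi] at hneg
    rw [hgoal]
    linarith [hpos, hneg]
end

section
/- The circle is topologically finite: every continuous injective map from the unit circle to itself is surjective. Precisely, if f is a continuous injection from the unit circle {z ∈ ℂ : |z| = 1} to itself, then f is surjective. In particular, the circle is not homeomorphic to any proper subset of itself. -/
open Metric Set

lemma no_continuous_injective_circle_to_real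
    (g : Metric.sphere (0 : ℂ) 1 → ℝ) (hg : Continuous g)
    (hi : Function.Injective g) : False := by
  haveI : Fact (Module.finrank ℝ ℂ = 1 + 1) := ⟨Complex.finrank_real_complex⟩
  haveI : PreconnectedSpace (Metric.sphere (0 : ℂ) 1) := by
    rw [← isPreconnected_iff_preconnectedSpace]
    apply isPreconnected_sphere
    rw [Complex.rank_real_complex]
    norm_num
  -- two distinct points on the circle
  have h1 : (1 : ℂ) ∈ Metric.sphere (0 : ℂ) 1 := by
    simp [mem_sphere_zero_iff_norm]
  have h2 : (-1 : ℂ) ∈ Metric.sphere (0 : ℂ) 1 := by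
    simp [mem_sphere_zero_iff_norm]
  set a : Metric.sphere (0 : ℂ) 1 := ⟨1, h1⟩
  set b : Metric.sphere (0 : ℂ) 1 := ⟨-1, h2⟩
  have hab : a ≠ b := by
    intro h
    have : (1 : ℂ) = -1 := congrArg Subtype.val h
    norm_num at this
  -- max and min
  obtain ⟨xM, -, hxM⟩ := isCompact_univ.exists_isMaxOn (univ_nonempty) hg.continuousOn
  obtain ⟨xm, -, hxm⟩ := isCompact_univ.exists_isMinOn (univ_nonempty) hg.continuousOn
  have hlt : g xm < g xM := by
    rcases lt_or_ge (g xm) (g xM) with h | h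
    · exact h
    · exfalso
      have hea : g a = g xM := le_antisymm (hxM (mem_univ a)) (h.trans (hxm (mem_univ a)))
      have heb : g b = g xM := le_antisymm (hxM (mem_univ b)) (h.trans (hxm (mem_univ b)))
      exact hab (hi (hea.trans heb.symm))
  set mid : ℝ := (g xm + g xM) / 2 with hmid
  have hm1 : g xm < mid := by rw [hmid]; linarith
  have hm2 : mid < g xM := by rw [hmid]; linarith
  -- intermediate value: get x2 with g x2 = mid
  have hmem : mid ∈ Set.range g :=
    intermediate_value_univ xm xM hg ⟨le_of_lt hm1, le_of_lt hm2⟩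
  obtain ⟨x2, hx2⟩ := hmem
  -- circle minus x2 is preconnected via stereographic projection
  set e2 := stereographic' 1 x2 with he2
  have hpc : IsPreconnected ({x2}ᶜ : Set (Metric.sphere (0 : ℂ) 1)) := by
    have ht : IsPreconnected e2.target := by
      rw [stereographic'_target]; exact isPreconnected_univ
    have := ht.image e2.symm e2.continuousOn_symm
    rwa [e2.symm_image_target_eq_source, stereographic'_source] at this
  have himg : IsPreconnected (g '' ({x2}ᶜ : Set (Metric.sphere (0 : ℂ) 1))) :=
    hpc.image g hg.continuousOn
  have hxmne : xm ≠ x2 := by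
    intro h; rw [h, hx2] at hm1; exact lt_irrefl _ hm1
  have hxMne : xM ≠ x2 := by
    intro h; rw [h, hx2] at hm2; exact lt_irrefl _ hm2
  have hmmem : mid ∈ g '' ({x2}ᶜ : Set (Metric.sphere (0 : ℂ) 1)) := by
    have hoc := himg.ordConnected
    exact hoc.out ⟨xm, hxmne, rfl⟩ ⟨xM, hxMne, rfl⟩ ⟨le_of_lt hm1, le_of_lt hm2⟩
  obtain ⟨y, hy, hgy⟩ := hmmem
  exact hy (hi (hgy.trans hx2.symm))

theorem circle_topologically_finite
    (f : Metric.sphere (0 : ℂ) 1 → Metric.sphere (0 : ℂ) 1)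
    (hf : Continuous f) (hinj : Function.Injective f) : Function.Surjective f := by
  haveI : Fact (Module.finrank ℝ ℂ = 1 + 1) := ⟨Complex.finrank_real_complex⟩
  by_contra hns
  simp only [Function.Surjective, not_forall] at hns
  obtain ⟨p, hp⟩ := hns
  push_neg at hp
  set e := stereographic' 1 p with he
  have hmaps : ∀ x, f x ∈ e.source := by
    intro x
    rw [stereographic'_source]
    exact fun h => hp x h
  set g : Metric.sphere (0 : ℂ) 1 → ℝ := fun x => e (f x) 0 with hg
  have hgc : Continuous g := by
    have hc : Continuous (fun x => e (f x)) := by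
      rw [← continuousOn_univ]
      exact e.continuousOn.comp hf.continuousOn fun x _ => hmaps x
    exact (continuous_apply 0).comp ((PiLp.continuous_ofLp _ _).comp hc)
  have hgi : Function.Injective g := by
    intro x y hxy
    have hexy : e (f x) = e (f y) := by
      ext i
      rw [Subsingleton.elim i 0]
      exact hxy
    exact hinj (e.injOn (hmaps x) (hmaps y) hexy)
  exact absurd hgi (by simpa using fun h => no_continuous_injective_circle_to_real g hgc h)
end

section
/- The 2-sphere is topologically finite: every continuous injective map from the unit sphere in ℝ³ to itself is surjective. Precisely, if f is a continuous injection from {x ∈ ℝ³ : ‖x‖ = 1} to itself, then f is surjective. In particular, the sphere is not homeomorphic to any proper subset of itself. -/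
open Complex Set

/-- A continuous `ℂ`-valued function on an interval with `exp ∘ D` constantly `-1`
is constant. -/
private lemma exp_neg_one_constancy {D : ℝ → ℂ} {a b : ℝ} (hab : a ≤ b)
    (hD : ContinuousOn D (Icc a b)) (h : ∀ t ∈ Icc a b, Complex.exp (D t) = -1) :
    D b = D a := by
  have key : ∀ t ∈ Icc a b, ∃ n : ℤ, D t - D a = n * (2 * Real.pi * I) := by
    intro t ht
    rw [← Complex.exp_eq_one_iff, Complex.exp_sub, h t ht, h a ⟨le_rfl, hab⟩,
      div_self (by norm_num)]
  obtain ⟨n, hn⟩ := key b ⟨hab, le_rfl⟩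
  rcases eq_or_ne n 0 with h0 | h0
  · rw [h0] at hn
    push_cast at hn
    rw [zero_mul] at hn
    linear_combination hn
  · exfalso
    set φ : ℝ → ℝ := fun t => (D t).im with hφ
    have him : ∀ (t : ℝ), ∀ (m : ℤ), D t - D a = m * (2 * Real.pi * I) →
        φ t = φ a + 2 * Real.pi * m := by
      intro t m hm
      have := congrArg Complex.im hm
      simp only [Complex.sub_im, Complex.mul_im, Complex.intCast_re, Complex.intCast_im,
        Complex.mul_re, Complex.I_re, Complex.I_im, Complex.ofReal_re, Complex.ofReal_im,
        Complex.re_ofNat, Complex.im_ofNat] at this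
      simp only [hφ]
      nlinarith [this]
    have hφc : ContinuousOn φ (Icc a b) := Complex.continuous_im.comp_continuousOn hD
    have hJ : IsPreconnected (φ '' Icc a b) := (isPreconnected_Icc).image φ hφc
    have hmem : ∀ x ∈ φ '' Icc a b, ∃ m : ℤ, x = φ a + 2 * Real.pi * m := by
      rintro x ⟨t, ht, rfl⟩
      obtain ⟨m, hm⟩ := key t ht
      exact ⟨m, him t m hm⟩
    have hIccsub : Icc (φ a) (φ b) ⊆ φ '' Icc a b ∧ Icc (φ b) (φ a) ⊆ φ '' Icc a b := by
      constructor
      · exact hJ.Icc_subset ⟨a, ⟨le_rfl, hab⟩, rfl⟩ ⟨b, ⟨hab, le_rfl⟩, rfl⟩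
      · exact hJ.Icc_subset ⟨b, ⟨hab, le_rfl⟩, rfl⟩ ⟨a, ⟨le_rfl, hab⟩, rfl⟩
    have hb' : φ b = φ a + 2 * Real.pi * n := him b n hn
    have hπ := Real.pi_pos
    have contra : ∀ x, x = φ a + Real.pi ∨ x = φ a - Real.pi → x ∉ φ '' Icc a b := by
      intro x hx hmemx
      obtain ⟨m, hm⟩ := hmem x hmemx
      rcases hx with hx | hx
      · rw [hx] at hm
        have : ((2 * m - 1 : ℤ) : ℝ) * Real.pi = 0 := by push_cast; nlinarith
        have h2 : ((2 * m - 1 : ℤ) : ℝ) = 0 := by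
          rcases mul_eq_zero.mp this with h | h
          · exact h
          · exact absurd h (ne_of_gt hπ)
        have : (2 * m - 1 : ℤ) = 0 := by exact_mod_cast h2
        omega
      · rw [hx] at hm
        have : ((2 * m + 1 : ℤ) : ℝ) * Real.pi = 0 := by push_cast; nlinarith
        have h2 : ((2 * m + 1 : ℤ) : ℝ) = 0 := by
          rcases mul_eq_zero.mp this with h | h
          · exact h
          · exact absurd h (ne_of_gt hπ)
        have : (2 * m + 1 : ℤ) = 0 := by exact_mod_cast h2
        omega
    rcases lt_or_gt_of_ne h0 with hneg | hpos
    · have hn1 : (n : ℝ) ≤ -1 := by exact_mod_cast (by omega : n ≤ -1)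
      refine contra (φ a - Real.pi) (Or.inr rfl) (hIccsub.2 ⟨?_, ?_⟩)
      · rw [hb']; nlinarith
      · nlinarith
    · have hn1 : (1 : ℝ) ≤ (n : ℝ) := by exact_mod_cast hpos
      refine contra (φ a + Real.pi) (Or.inl rfl) (hIccsub.1 ⟨?_, ?_⟩)
      · nlinarith
      · rw [hb']; nlinarith

theorem sphere_topologically_finite
    (f : Metric.sphere (0 : EuclideanSpace ℝ (Fin 3)) 1 →
      Metric.sphere (0 : EuclideanSpace ℝ (Fin 3)) 1)
    (hf : Continuous f) (hinj : Function.Injective f) : Function.Surjective f := by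
  by_contra hsurj
  rw [Function.Surjective] at hsurj
  push_neg at hsurj
  obtain ⟨p, hp⟩ := hsurj
  -- the latitude-circle parametrization of the sphere
  set ρ : ℝ → ℝ := fun r => max 0 (min r 1) with hρ
  have hρ0 : ∀ r, 0 ≤ ρ r := fun r => le_max_left 0 _
  have hρ1 : ∀ r, ρ r ≤ 1 := fun r => max_le (by norm_num) (min_le_right r 1)
  have hρc : Continuous ρ := continuous_const.max (continuous_id.min continuous_const)
  set q : ℝ × ℝ → EuclideanSpace ℝ (Fin 3) := fun z =>
    (WithLp.equiv 2 (Fin 3 → ℝ)).symm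
      ![ρ z.1 * Real.cos (2 * Real.pi * z.2), ρ z.1 * Real.sin (2 * Real.pi * z.2),
        Real.sqrt (1 - ρ z.1 ^ 2)] with hq
  have hqmem : ∀ z, q z ∈ Metric.sphere (0 : EuclideanSpace ℝ (Fin 3)) 1 := by
    intro z
    have h1 : 0 ≤ 1 - ρ z.1 ^ 2 := by nlinarith [hρ0 z.1, hρ1 z.1]
    rw [mem_sphere_zero_iff_norm, EuclideanSpace.norm_eq]
    rw [show (1 : ℝ) = Real.sqrt 1 from (Real.sqrt_one).symm]
    congr 1
    simp only [hq, WithLp.equiv_symm_apply, PiLp.toLp_apply, Fin.sum_univ_three]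
    simp only [Matrix.cons_val_zero, Matrix.cons_val_one, Matrix.head_cons,
      Matrix.cons_val_two, Matrix.tail_cons, Real.norm_eq_abs]
    rw [_root_.sq_abs, _root_.sq_abs, _root_.sq_abs, Real.sq_sqrt h1]
    have hcs : (ρ z.1 * Real.cos (2 * Real.pi * z.2)) ^ 2
        + (ρ z.1 * Real.sin (2 * Real.pi * z.2)) ^ 2 = ρ z.1 ^ 2 := by
      rw [mul_pow, mul_pow, ← mul_add, Real.cos_sq_add_sin_sq, mul_one]
    linarith
  have hqc : Continuous q := by
    apply (PiLp.continuous_toLp 2 (fun _ : Fin 3 => ℝ)).comp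
    apply continuous_pi
    intro i
    fin_cases i <;> simp <;> fun_prop
  -- the stereographic projection composed with f, as a map to ℂ
  haveI : Fact (Module.finrank ℝ (EuclideanSpace ℝ (Fin 3)) = 2 + 1) :=
    ⟨by simp [finrank_euclideanSpace_fin]⟩
  set st := stereographic' 2 p with hst
  have hsource : st.source = {p}ᶜ := stereographic'_source p
  have hfx : ∀ x, f x ∈ st.source := by
    intro x; rw [hsource]; exact hp x
  set g₀ : Metric.sphere (0 : EuclideanSpace ℝ (Fin 3)) 1 → EuclideanSpace ℝ (Fin 2) :=
    fun x => st (f x) with hg₀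
  have hg₀c : Continuous g₀ := st.continuousOn.comp_continuous hf hfx
  have hg₀i : Function.Injective g₀ := by
    intro x y hxy
    exact hinj (st.injOn (hfx x) (hfx y) hxy)
  set g : Metric.sphere (0 : EuclideanSpace ℝ (Fin 3)) 1 → ℂ :=
    fun x => (g₀ x 0 : ℝ) + (g₀ x 1 : ℝ) * I with hg
  have hgc : Continuous g := by
    apply Continuous.add
    · exact Complex.continuous_ofReal.comp ((PiLp.continuous_apply 2 _ (0 : Fin 2)).comp hg₀c)
    · exact (Complex.continuous_ofReal.comp ((PiLp.continuous_apply 2 _ (1 : Fin 2)).comp hg₀c)).mul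
        continuous_const
  have hgi : Function.Injective g := by
    intro x y hxy
    apply hg₀i
    rw [hg] at hxy
    simp only [Complex.ext_iff, Complex.add_re, Complex.ofReal_re, Complex.mul_re,
      Complex.I_re, Complex.I_im, Complex.ofReal_im, Complex.add_im, Complex.mul_im] at hxy
    ext i
    fin_cases i
    · simpa using hxy.1
    · simpa using hxy.2
  -- the antipodal map
  set N : Metric.sphere (0 : EuclideanSpace ℝ (Fin 3)) 1 →
      Metric.sphere (0 : EuclideanSpace ℝ (Fin 3)) 1 := fun x => ⟨-(x : EuclideanSpace ℝ (Fin 3)), by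
    have hx : ‖(x : EuclideanSpace ℝ (Fin 3))‖ = 1 := mem_sphere_zero_iff_norm.mp x.2
    rw [mem_sphere_zero_iff_norm, norm_neg]
    exact hx⟩ with hN
  have hNc : Continuous N := Continuous.subtype_mk (continuous_subtype_val.neg) _
  have hNN : ∀ x, N (N x) = x := by
    intro x; apply Subtype.ext; simp [hN]
  have hNne : ∀ x, N x ≠ x := by
    intro x hx
    have h1 : -(x : EuclideanSpace ℝ (Fin 3)) = (x : EuclideanSpace ℝ (Fin 3)) :=
      congrArg Subtype.val hx
    have h2 : (x : EuclideanSpace ℝ (Fin 3)) = 0 := by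
      have h3 : (x : EuclideanSpace ℝ (Fin 3)) + (x : EuclideanSpace ℝ (Fin 3)) = 0 := by
        nth_rewrite 1 [← h1]
        exact neg_add_cancel _
      have h4 : (2 : ℝ) • (x : EuclideanSpace ℝ (Fin 3)) = 0 := by rw [two_smul]; exact h3
      rcases smul_eq_zero.mp h4 with h | h
      · norm_num at h
      · exact h
    have hx1 : ‖(x : EuclideanSpace ℝ (Fin 3))‖ = 1 := mem_sphere_zero_iff_norm.mp x.2
    rw [h2] at hx1
    simp at hx1
  -- the odd, nowhere-vanishing map H
  set H : Metric.sphere (0 : EuclideanSpace ℝ (Fin 3)) 1 → ℂ :=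
    fun x => g x - g (N x) with hH
  have hHc : Continuous H := hgc.sub (hgc.comp hNc)
  have hHne : ∀ x, H x ≠ 0 := by
    intro x hx
    exact hNne x (hgi (sub_eq_zero.mp hx)).symm
  have hHodd : ∀ x, H (N x) = -H x := by
    intro x
    simp only [hH, hNN x, neg_sub]
  -- the homotopy of loops
  set Γ : ℝ × ℝ → ℂ := fun z => H ⟨q z, hqmem z⟩ with hΓ
  have hΓc : Continuous Γ := hHc.comp (hqc.subtype_mk _)
  have hΓne : ∀ z, Γ z ≠ 0 := fun z => hHne _
  -- positive lower bound on ‖H‖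
  haveI : Nonempty (Metric.sphere (0 : EuclideanSpace ℝ (Fin 3)) 1) := ⟨⟨q (0, 0), hqmem _⟩⟩
  obtain ⟨x₀, -, hx₀⟩ := isCompact_univ.exists_isMinOn (Set.univ_nonempty)
    (hHc.norm.continuousOn)
  set ε : ℝ := ‖H x₀‖ with hε
  have hεpos : 0 < ε := norm_pos_iff.mpr (hHne x₀)
  have hεle : ∀ z, ε ≤ ‖Γ z‖ := fun z => hx₀ (mem_univ _)
  -- properties of the loops
  have hqper : ∀ r t, q (r, t + 1) = q (r, t) := by
    intro r t
    simp only [hq]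
    congr 1
    have hc : Real.cos (2 * Real.pi * (t + 1)) = Real.cos (2 * Real.pi * t) := by
      rw [show 2 * Real.pi * (t + 1) = 2 * Real.pi * t + 2 * Real.pi by ring,
        Real.cos_add_two_pi]
    have hs : Real.sin (2 * Real.pi * (t + 1)) = Real.sin (2 * Real.pi * t) := by
      rw [show 2 * Real.pi * (t + 1) = 2 * Real.pi * t + 2 * Real.pi by ring,
        Real.sin_add_two_pi]
    rw [hc, hs]
  have hΓper : ∀ r, Γ (r, 1) = Γ (r, 0) := by
    intro r
    have := hqper r 0
    rw [zero_add] at this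
    simp only [hΓ]
    congr 1
    exact Subtype.ext this
  have hΓ0 : ∀ t, Γ (0, t) = Γ (0, 0) := by
    intro t
    simp only [hΓ]
    congr 1
    apply Subtype.ext
    simp only [hq]
    congr 1
    have : ρ 0 = 0 := by simp [hρ]
    rw [this]
    simp
  have hρone : ρ 1 = 1 := by simp [hρ]
  have hqanti : ∀ t, q (1, t + 1/2) = -(q (1, t)) := by
    intro t
    simp only [hq, hρone]
    have hc : Real.cos (2 * Real.pi * (t + 1/2)) = -Real.cos (2 * Real.pi * t) := by
      rw [show 2 * Real.pi * (t + 1/2) = 2 * Real.pi * t + Real.pi by ring, Real.cos_add_pi]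
    have hs : Real.sin (2 * Real.pi * (t + 1/2)) = -Real.sin (2 * Real.pi * t) := by
      rw [show 2 * Real.pi * (t + 1/2) = 2 * Real.pi * t + Real.pi by ring, Real.sin_add_pi]
    rw [hc, hs]
    ext i
    rw [PiLp.neg_apply]
    simp only [WithLp.equiv_symm_apply, PiLp.toLp_apply]
    fin_cases i <;> simp
  have hΓanti : ∀ t, Γ (1, t + 1/2) = -Γ (1, t) := by
    intro t
    have h1 : (⟨q (1, t + 1/2), hqmem _⟩ :
        Metric.sphere (0 : EuclideanSpace ℝ (Fin 3)) 1) = N ⟨q (1, t), hqmem _⟩ := by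
      apply Subtype.ext
      simp only [hN]
      exact hqanti t
    simp only [hΓ]
    rw [h1, hHodd]
  -- uniform continuity on the unit square
  obtain ⟨δ, hδpos, hδ⟩ := Metric.uniformContinuousOn_iff.mp
    ((isCompact_Icc.prod isCompact_Icc).uniformContinuousOn_of_continuous
      hΓc.continuousOn) ε hεpos
  obtain ⟨n, hn⟩ := exists_nat_one_div_lt hδpos
  set M : ℕ := n + 1 with hM
  have hMpos : (0 : ℝ) < M := by positivity
  have hMδ : 1 / (M : ℝ) < δ := by
    rw [hM]
    push_cast
    exact hn
  -- the key induction: each latitude loop has a lift with equal endpoints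
  have main : ∀ k : ℕ, k ≤ M → ∃ L : ℝ → ℂ, ContinuousOn L (Icc 0 1) ∧
      (∀ t ∈ Icc 0 1, Complex.exp (L t) = Γ ((k : ℝ) / M, t)) ∧ L 1 = L 0 := by
    intro k
    induction k with
    | zero =>
      intro _
      refine ⟨fun _ => Complex.log (Γ (0, 0)), continuousOn_const, fun t ht => ?_, rfl⟩
      rw [Complex.exp_log (hΓne (0, 0))]
      rw [show ((0 : ℕ) : ℝ) / M = 0 by simp]
      exact (hΓ0 t).symm
    | succ k ih =>
      intro hk1
      obtain ⟨L, hLc, hLe, hL10⟩ := ih (le_of_lt (Nat.lt_of_succ_le hk1))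
      have hk : (k : ℝ) ≤ M := by exact_mod_cast le_of_lt (Nat.lt_of_succ_le hk1)
      have hk1' : ((k : ℝ) + 1) ≤ M := by exact_mod_cast hk1
      set r₀ : ℝ := (k : ℝ) / M with hr₀
      set r₁ : ℝ := ((k : ℕ) + 1 : ℝ) / M with hr₁
      have hr₀mem : r₀ ∈ Icc (0 : ℝ) 1 := by
        constructor
        · positivity
        · rw [hr₀, div_le_one hMpos]; exact hk
      have hr₁mem : r₁ ∈ Icc (0 : ℝ) 1 := by
        constructor
        · positivity
        · rw [hr₁, div_le_one hMpos]; exact hk1'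
      have hclose : ∀ t ∈ Icc (0 : ℝ) 1, ‖Γ (r₁, t) - Γ (r₀, t)‖ < ε := by
        intro t ht
        have hdist : dist ((r₁, t) : ℝ × ℝ) ((r₀, t) : ℝ × ℝ) < δ := by
          rw [Prod.dist_eq]
          have h1 : dist r₁ r₀ = 1 / (M : ℝ) := by
            rw [Real.dist_eq, hr₁, hr₀]
            rw [show ((k : ℕ) + 1 : ℝ) / M - (k : ℝ) / M = 1 / M by field_simp; ring]
            rw [abs_of_pos (by positivity)]
          rw [h1, dist_self]
          calc max (1 / (M : ℝ)) 0 = 1 / (M : ℝ) := max_eq_left (by positivity)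
            _ < δ := hMδ
        have := hδ (r₁, t) (mk_mem_prod hr₁mem ht) (r₀, t) (mk_mem_prod hr₀mem ht) hdist
        rwa [Complex.dist_eq] at this
      have hratio_ne : ∀ t, Γ (r₁, t) / Γ (r₀, t) ≠ 0 :=
        fun t => div_ne_zero (hΓne _) (hΓne _)
      have hratio_close : ∀ t ∈ Icc (0 : ℝ) 1, ‖Γ (r₁, t) / Γ (r₀, t) - 1‖ < 1 := by
        intro t ht
        rw [div_sub_one (hΓne _)]
        rw [norm_div]
        rw [div_lt_one (norm_pos_iff.mpr (hΓne _))]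
        exact lt_of_lt_of_le (hclose t ht) (hεle _)
      have hslit : ∀ t ∈ Icc (0 : ℝ) 1, Γ (r₁, t) / Γ (r₀, t) ∈ Complex.slitPlane := by
        intro t ht
        rw [Complex.mem_slitPlane_iff]
        left
        have h1 := hratio_close t ht
        have h2 : |(Γ (r₁, t) / Γ (r₀, t) - 1).re| ≤ ‖Γ (r₁, t) / Γ (r₀, t) - 1‖ :=
          Complex.abs_re_le_norm _
        have h3 : (Γ (r₁, t) / Γ (r₀, t) - 1).re = (Γ (r₁, t) / Γ (r₀, t)).re - 1 := by
          simp
        rw [h3] at h2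
        have := abs_le.mp h2
        linarith [this.1]
      refine ⟨fun t => L t + Complex.log (Γ (r₁, t) / Γ (r₀, t)), ?_, ?_, ?_⟩
      · apply hLc.add
        apply ContinuousOn.clog
        · apply ContinuousOn.div
          · exact (hΓc.comp (Continuous.prodMk_right r₁)).continuousOn
          · exact (hΓc.comp (Continuous.prodMk_right r₀)).continuousOn
          · exact fun t _ => hΓne _
        · exact hslit
      · intro t ht
        rw [show (((k : ℕ) + 1 : ℕ) : ℝ) / (M : ℝ) = r₁ by rw [hr₁]; push_cast; ring]
        rw [Complex.exp_add, hLe t ht, Complex.exp_log (hratio_ne t)]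
        rw [mul_comm, div_mul_cancel₀ _ (hΓne _)]
      · have h1 : Γ (r₁, 1) / Γ (r₀, 1) = Γ (r₁, 0) / Γ (r₀, 0) := by
          rw [hΓper r₁, hΓper r₀]
        simp only [h1, hL10]
  -- extract the lift of the equatorial loop
  obtain ⟨L, hLc, hLe, hL10⟩ := main M le_rfl
  have hM1 : ((M : ℕ) : ℝ) / M = 1 := div_self (ne_of_gt hMpos)
  rw [hM1] at hLe
  -- the half-turn difference function
  set D : ℝ → ℂ := fun t => L (t + 1/2) - L t with hD
  have hDc : ContinuousOn D (Icc 0 (1/2)) := by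
    apply ContinuousOn.sub
    · apply hLc.comp (Continuous.continuousOn (by fun_prop))
      intro t ht
      constructor
      · linarith [ht.1]
      · linarith [ht.2]
    · exact hLc.mono (Icc_subset_Icc le_rfl (by norm_num))
  have hDexp : ∀ t ∈ Icc (0 : ℝ) (1/2), Complex.exp (D t) = -1 := by
    intro t ht
    have ht1 : t ∈ Icc (0 : ℝ) 1 := ⟨ht.1, by linarith [ht.2]⟩
    have ht2 : t + 1/2 ∈ Icc (0 : ℝ) 1 := ⟨by linarith [ht.1], by linarith [ht.2]⟩
    show Complex.exp (L (t + 1/2) - L t) = -1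
    rw [Complex.exp_sub, hLe _ ht2, hLe _ ht1, hΓanti t, neg_div, div_self (hΓne _)]
  have hcon : D (1/2) = D 0 := exp_neg_one_constancy (by norm_num) hDc hDexp
  have e1 : L 1 - L (1/2) = L (1/2) - L 0 := by
    have h := hcon
    rw [show D (1/2) = L 1 - L (1/2) by rw [hD]; norm_num,
      show D 0 = L (1/2) - L 0 by rw [hD]; norm_num] at h
    exact h
  have hhalf : L (1/2) = L 0 := by linear_combination (hL10 - e1) / 2
  have hD0 : D 0 = 0 := by
    rw [show D 0 = L (1/2) - L 0 by rw [hD]; norm_num, hhalf, sub_self]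
  have := hDexp 0 ⟨le_rfl, by norm_num⟩
  rw [hD0, Complex.exp_zero] at this
  exact one_ne_zero (by linear_combination this / 2 : (1 : ℂ) = 0)
end
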